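/- Theorem 3.5 (exponential mechanism for non-convex Lipschitz losses over a convex constraint set). There is a universal constant c > 0 such that the following holds. Let C ⊆ ℝ^p be a compact convex set with diameter ‖C‖ > 0 and positive Lebesgue measure, and suppose that for every d ∈ τ the map θ ↦ ℓ(θ; d) is L-Lipschitz on C (no convexity of ℓ is assumed). Fix ε > 0, a dataset D of size n with p ≤ εn/2, and let μ_D be the Gibbs measure on C with density proportional to exp(−(εn/(2L‖C‖))·𝓛(θ; D)). Then E_{θ ∼ μ_D}[𝓛(θ; D)] − min_{θ ∈ C} 𝓛(θ; D) ≤ c · (Lp‖C‖/(εn)) · log(εn/p). -/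

import Mathlib

open MeasureTheory Real

noncomputable section
open scoped NNReal ENNReal
set_option maxHeartbeats 1000000

/-- ℝ^p as a Euclidean space. -/
abbrev Eu (p : ℕ) := EuclideanSpace ℝ (Fin p)

/-- The Gibbs measure on `C` with inverse temperature `β` for the potential `F`:
the probability measure whose density with respect to Lebesgue measure restricted
to `C` is proportional to `exp (-β * F θ)`. -/
def gibbs {p : ℕ} (C : Set (Eu p)) (β : ℝ) (F : Eu p → ℝ) : Measure (Eu p) :=
  (∫⁻ θ in C, ENNReal.ofReal (Real.exp (-β * F θ)))⁻¹ •
    (volume.restrict C).withDensity fun θ => ENNReal.ofReal (Real.exp (-β * F θ))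

/-- The empirical loss `𝓛(θ; D) = (1/n) ∑ i, ℓ(θ; dᵢ)`. -/
def empLoss {p n : ℕ} {τ : Type*} (ℓ : Eu p → τ → ℝ) (D : Fin n → τ) (θ : Eu p) : ℝ :=
  (1 / (n : ℝ)) * ∑ i, ℓ θ (D i)

lemma gibbs_utility {p : ℕ} (hp : 1 ≤ p) {C : Set (Eu p)} (hC : IsCompact C)
    (hconv : Convex ℝ C) (hd : 0 < Metric.diam C) (hv : 0 < volume C)
    {F : Eu p → ℝ} {L : ℝ} (hL : 0 < L)
    (hFlip : LipschitzOnWith L.toNNReal F C) {β : ℝ} (hβ : 0 < β)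
    (hpB : (p : ℝ) ≤ β * L * Metric.diam C) :
    ∫ θ, F θ ∂(gibbs C β F) - sInf (F '' C) ≤
      ((p : ℝ) * Real.log (β * L * Metric.diam C / p) + p
        + Real.log (β * L * Metric.diam C) + 1) / β := by
  obtain ⟨g, hg, hEq⟩ := hFlip.extend_real
  set d : ℝ := Metric.diam C with hd_def
  have hgc : Continuous g := hg.continuous
  have hCm : MeasurableSet C := hC.measurableSet
  have hne : C.Nonempty := nonempty_of_measure_ne_zero hv.ne'
  obtain ⟨θs, hθs, hmin⟩ := hC.exists_isMinOn hne hgc.continuousOn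
  set m : ℝ := g θs with hm_def
  have hLc : ((L.toNNReal : ℝ≥0) : ℝ) = L := Real.coe_toNNReal L hL.le
  have hmin' : ∀ θ ∈ C, m ≤ g θ := fun θ hθ => hmin hθ
  -- upper bound for g on C
  have hdist_le : ∀ θ ∈ C, ∀ θ' ∈ C, g θ - g θ' ≤ L * dist θ θ' := by
    intro θ hθ θ' hθ'
    have h2 : dist (g θ) (g θ') ≤ L * dist θ θ' := by
      simpa [hLc] using hg.dist_le_mul θ θ'
    rw [Real.dist_eq] at h2
    calc g θ - g θ' ≤ |g θ - g θ'| := le_abs_self _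
      _ ≤ L * dist θ θ' := h2
  have hub : ∀ θ ∈ C, g θ ≤ m + L * d := by
    intro θ hθ
    have h3 : dist θ θs ≤ d := Metric.dist_le_diam_of_mem hC.isBounded hθ hθs
    have := hdist_le θ hθ θs hθs
    nlinarith [dist_nonneg (x := θ) (y := θs)]
  -- the density
  set ρ : Eu p → ℝ := fun θ => Real.exp (-β * g θ) with hρ_def
  have hρc : Continuous ρ := Real.continuous_exp.comp (by fun_prop)
  have hρpos : ∀ θ, 0 < ρ θ := fun θ => Real.exp_pos _
  have hρint : IntegrableOn ρ C volume := hρc.continuousOn.integrableOn_compact hC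
  have hVlt : volume C < ⊤ := hC.measure_lt_top
  set V : ℝ := (volume C).toReal with hV_def
  have hVpos : 0 < V := ENNReal.toReal_pos hv.ne' hVlt.ne
  set w : ℝ := ∫ θ in C, ρ θ with hw_def
  -- w is positive
  have hwlb0 : Real.exp (-β * (m + L * d)) * V ≤ w := by
    have h1 : ∫ θ in C, Real.exp (-β * (m + L * d)) ∂volume
        = V * Real.exp (-β * (m + L * d)) := by
      rw [setIntegral_const]; simp [smul_eq_mul]; rfl
    have h2 : ∫ θ in C, Real.exp (-β * (m + L * d)) ∂volume ≤ w := by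
      refine setIntegral_mono_on (integrableOn_const hVlt.ne) hρint hCm ?_
      intro θ hθ
      exact Real.exp_le_exp.2 (by nlinarith [hub θ hθ])
    calc Real.exp (-β * (m + L * d)) * V
        = ∫ θ in C, Real.exp (-β * (m + L * d)) ∂volume := by rw [h1]; ring
      _ ≤ w := h2
  have hw : 0 < w := lt_of_lt_of_le (by positivity) hwlb0
  -- identify gibbs measure
  have hae : (fun θ => ENNReal.ofReal (Real.exp (-β * F θ)))
      =ᵐ[volume.restrict C] (fun θ => ENNReal.ofReal (ρ θ)) := by
    filter_upwards [ae_restrict_mem hCm] with θ hθ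
    simp [hρ_def, hEq hθ]
  have hZeq : (∫⁻ θ in C, ENNReal.ofReal (Real.exp (-β * F θ))) = ENNReal.ofReal w := by
    rw [lintegral_congr_ae hae]
    exact (ofReal_integral_eq_lintegral_ofReal hρint
      (Filter.Eventually.of_forall fun θ => (hρpos θ).le)).symm
  have hgibbs : gibbs C β F = (ENNReal.ofReal w)⁻¹ •
      ((volume.restrict C).withDensity fun θ => ENNReal.ofReal (ρ θ)) := by
    unfold gibbs; rw [hZeq, withDensity_congr_ae hae]
  -- expectation formula
  have hFg : ∫ θ, F θ ∂(gibbs C β F) = ∫ θ, g θ ∂(gibbs C β F) := by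
    refine integral_congr_ae ?_
    rw [hgibbs]
    refine Measure.ae_smul_measure ?_ _
    have h0 : F =ᵐ[volume.restrict C] g :=
      (ae_restrict_mem hCm).mono fun θ hθ => hEq hθ
    exact (withDensity_absolutelyContinuous _ _).ae_eq h0
  set I : ℝ := ∫ θ in C, ρ θ * g θ with hI_def
  have hIint : IntegrableOn (fun θ => ρ θ * g θ) C volume :=
    (hρc.mul hgc).continuousOn.integrableOn_compact hC
  have hE : ∫ θ, g θ ∂(gibbs C β F) = w⁻¹ * I := by
    rw [hgibbs, integral_smul_measure]
    have hmeas : Measurable fun θ => (ρ θ).toNNReal :=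
      (continuous_real_toNNReal.comp hρc).measurable
    have : ((volume.restrict C).withDensity fun θ => ENNReal.ofReal (ρ θ))
        = (volume.restrict C).withDensity fun θ => (((ρ θ).toNNReal : ℝ≥0) : ℝ≥0∞) := rfl
    rw [this, integral_withDensity_eq_integral_smul hmeas]
    have h1 : ∫ θ in C, (ρ θ).toNNReal • g θ = I := by
      refine setIntegral_congr_fun hCm fun θ _ => ?_
      simp [NNReal.smul_def, Real.coe_toNNReal _ (hρpos θ).le]
    rw [h1, ENNReal.toReal_inv, ENNReal.toReal_ofReal hw.le, smul_eq_mul]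
  set N : ℝ := ∫ θ in C, ρ θ * (g θ - m) with hN_def
  have hNint : IntegrableOn (fun θ => ρ θ * (g θ - m)) C volume :=
    (hρc.mul (hgc.sub continuous_const)).continuousOn.integrableOn_compact hC
  have hN : N = I - m * w := by
    have h1 : (fun θ => ρ θ * (g θ - m)) = fun θ => ρ θ * g θ - m * ρ θ := by
      funext θ; ring
    rw [hN_def, h1, integral_sub hIint (hρint.const_mul m), integral_const_mul, hI_def]
  have hsInf : sInf (F '' C) = m := by
    have himg : F '' C = g '' C := Set.image_congr fun θ hθ => hEq hθ
    rw [himg]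
    refine le_antisymm (csInf_le ⟨m, ?_⟩ (Set.mem_image_of_mem _ hθs))
      (le_csInf (hne.image _) ?_) <;>
    · rintro y ⟨x, hx, rfl⟩
      exact hmin' x hx
  have hEm : ∫ θ, F θ ∂(gibbs C β F) - sInf (F '' C) = w⁻¹ * N := by
    rw [hFg, hE, hsInf, hN]
    field_simp
  -- the core bound
  set B : ℝ := β * L * d with hB_def
  have hppos : (0 : ℝ) < p := by exact_mod_cast hp
  have hp1 : (1 : ℝ) ≤ p := by exact_mod_cast hp
  have hB : 0 < B := lt_of_lt_of_le hppos hpB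
  have hB1 : 1 ≤ B := le_trans hp1 hpB
  have hBp1 : 1 ≤ B / p := (one_le_div hppos).2 hpB
  set t : ℝ := (p : ℝ) / B with ht_def
  have ht0 : 0 < t := by positivity
  have ht1 : t ≤ 1 := (div_le_one hB).2 hpB
  set a : ℝ := ((p : ℝ) * Real.log (B / p) + p + Real.log B) / β with ha_def
  have ha : 0 ≤ a := by
    have h1 := Real.log_nonneg hBp1
    have h2 := Real.log_nonneg hB1
    positivity
  set K : ℝ := L * d * Real.exp (-β * (m + a)) with hK_def
  have hKpos : 0 < K := by positivity
  -- lower bound for w via the shrunk set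
  set C' : Set (Eu p) := AffineMap.homothety θs t '' C with hC'_def
  have hC'comp : IsCompact C' := hC.image (AffineMap.homothety_continuous θs t)
  have hC'meas : MeasurableSet C' := hC'comp.measurableSet
  have hC'sub : C' ⊆ C := by
    rintro _ ⟨y, hy, rfl⟩
    have h1 : AffineMap.homothety θs t y = (1 - t) • θs + t • y := by
      rw [AffineMap.homothety_apply]
      simp only [vsub_eq_sub, vadd_eq_add]
      module
    rw [h1]
    exact hconv hθs hy (by linarith) ht0.le (by ring)
  have hC'vol : (volume C').toReal = t ^ p * V := by
    rw [hC'_def, Measure.addHaar_image_homothety, finrank_euclideanSpace_fin,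
      abs_of_nonneg (by positivity), ENNReal.toReal_mul,
      ENNReal.toReal_ofReal (by positivity), hV_def]
  have hgC' : ∀ z ∈ C', g z ≤ m + L * d * t := by
    rintro _ ⟨y, hy, rfl⟩
    have hz : AffineMap.homothety θs t y ∈ C := hC'sub (Set.mem_image_of_mem _ hy)
    have hdist : dist (AffineMap.homothety θs t y) θs = t * dist y θs := by
      rw [AffineMap.homothety_apply]
      simp only [vsub_eq_sub, vadd_eq_add, dist_eq_norm, add_sub_cancel_right, norm_smul,
        Real.norm_eq_abs, abs_of_nonneg ht0.le]
    have h2 := hdist_le _ hz θs hθs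
    rw [hdist] at h2
    have h3 : dist y θs ≤ d := Metric.dist_le_diam_of_mem hC.isBounded hy hθs
    have h4 : L * (t * dist y θs) ≤ L * (t * d) := by gcongr
    have h5 : L * (t * d) = L * d * t := by ring
    linarith
  have hwlow : Real.exp (-β * (m + L * d * t)) * (t ^ p * V) ≤ w := by
    have h1 : ∫ θ in C', Real.exp (-β * (m + L * d * t)) ∂volume
        = Real.exp (-β * (m + L * d * t)) * (t ^ p * V) := by
      rw [setIntegral_const, measureReal_def, hC'vol, smul_eq_mul]; ring
    have h2 : ∫ θ in C', Real.exp (-β * (m + L * d * t)) ∂volume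
        ≤ ∫ θ in C', ρ θ ∂volume := by
      refine setIntegral_mono_on
        (integrableOn_const (lt_of_le_of_lt (measure_mono hC'sub) hVlt).ne)
        (hρint.mono_set hC'sub) hC'meas fun θ hθ => ?_
      exact Real.exp_le_exp.2 (by nlinarith [hgC' θ hθ])
    have h3 : ∫ θ in C', ρ θ ∂volume ≤ w := by
      refine setIntegral_mono_set hρint
        (Filter.Eventually.of_forall fun θ => (hρpos θ).le)
        (Filter.Eventually.of_forall hC'sub)
    linarith [h1 ▸ h2]
  have hwlowpos : 0 < Real.exp (-β * (m + L * d * t)) * (t ^ p * V) := by positivity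
  -- upper bound for N
  have hNub : N ≤ a * w + K * V := by
    have hptw : ∀ θ ∈ C, ρ θ * (g θ - m) ≤ a * ρ θ + K := by
      intro θ hθ
      by_cases hcase : g θ - m ≤ a
      · have h1 : ρ θ * (g θ - m) ≤ ρ θ * a :=
          mul_le_mul_of_nonneg_left hcase (hρpos θ).le
        nlinarith [hKpos]
      · push_neg at hcase
        have h1 : ρ θ ≤ Real.exp (-β * (m + a)) :=
          Real.exp_le_exp.2 (by nlinarith)
        have h2 : g θ - m ≤ L * d := by nlinarith [hub θ hθ]
        have h3 : 0 ≤ g θ - m := by nlinarith [hmin' θ hθ]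
        have h4 : ρ θ * (g θ - m) ≤ Real.exp (-β * (m + a)) * (L * d) :=
          mul_le_mul h1 h2 h3 (Real.exp_pos _).le
        nlinarith [mul_nonneg ha (hρpos θ).le]
    have hRint : IntegrableOn (fun θ => a * ρ θ + K) C volume :=
      (hρint.const_mul a).add (integrableOn_const hVlt.ne)
    have h5 : N ≤ ∫ θ in C, (a * ρ θ + K) ∂volume :=
      setIntegral_mono_on hNint hRint hCm hptw
    have h6 : ∫ θ in C, (a * ρ θ + K) ∂volume = a * w + K * V := by
      rw [integral_add (hρint.const_mul a) (integrableOn_const hVlt.ne),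
        integral_const_mul, setIntegral_const, measureReal_def, ← hV_def, smul_eq_mul, hw_def]
      ring
    linarith [h6 ▸ h5]
  -- the magic identity
  clear_value d m ρ V w I N B t a K
  have hβt : β * (L * (d * t)) = p := by
    rw [ht_def, hB_def]; field_simp
  have hβa : β * a = (p : ℝ) * Real.log (B / p) + p + Real.log B := by
    rw [ha_def, mul_comm, div_mul_cancel₀ _ hβ.ne']
  have hKey : K * V / (Real.exp (-β * (m + L * d * t)) * (t ^ p * V)) = 1 / β := by
    have hr : Real.exp (-β * (m + a))
        = Real.exp (-β * (m + L * d * t)) * (t ^ p * B⁻¹) := by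
      have h9 : -β * (m + a) = -β * (m + L * d * t)
          + (-((p : ℝ) * Real.log (B / p)) + -Real.log B) := by
        have h10 : β * (L * d * t) = p := by rw [← hβt]; ring
        linear_combination h10 - hβa
      rw [h9, Real.exp_add, Real.exp_add]
      congr 1
      rw [Real.exp_neg, Real.exp_neg, Real.exp_nat_mul, Real.exp_log (by positivity : 0 < B / p),
        Real.exp_log hB]
      rw [ht_def, div_pow, inv_div, div_pow]
    rw [hK_def, hr]
    have hE0 : Real.exp (-β * (m + L * d * t)) ≠ 0 := (Real.exp_pos _).ne'
    have htp : t ^ p ≠ 0 := by positivity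
    field_simp
    rw [hB_def]
    ring
  -- combine
  have key : w⁻¹ * N ≤ a + 1 / β := by
    have h5 : w⁻¹ * N ≤ w⁻¹ * (a * w + K * V) :=
      mul_le_mul_of_nonneg_left hNub (inv_nonneg.2 hw.le)
    have h6 : w⁻¹ * (a * w + K * V) = a + K * V / w := by
      field_simp
    have h7 : K * V / w ≤ K * V / (Real.exp (-β * (m + L * d * t)) * (t ^ p * V)) :=
      div_le_div_of_nonneg_left (by positivity) hwlowpos hwlow
    linarith [hKey ▸ h7]
  rw [hEm]
  have hfin : a + 1 / β = ((p : ℝ) * Real.log (B / p) + p + Real.log B + 1) / β := by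
    rw [ha_def]; field_simp
  rw [hB_def, hd_def] at hfin ⊢
  linarith [hfin ▸ key]

lemma empLoss_lipschitz {p n : ℕ} {τ : Type} (ℓ : Eu p → τ → ℝ) (D : Fin n → τ)
    {C : Set (Eu p)} {L : ℝ} (hL : 0 ≤ L) (hn : 1 ≤ n)
    (hlip : ∀ d : τ, LipschitzOnWith L.toNNReal (fun θ => ℓ θ d) C) :
    LipschitzOnWith L.toNNReal (empLoss ℓ D) C := by
  rw [lipschitzOnWith_iff_dist_le_mul]
  intro x hx y hy
  have hLc : ((L.toNNReal : ℝ≥0) : ℝ) = L := Real.coe_toNNReal L hL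
  have hn0 : (0:ℝ) < n := by exact_mod_cast hn
  rw [Real.dist_eq, hLc]
  have h1 : empLoss ℓ D x - empLoss ℓ D y
      = (1 / (n:ℝ)) * ∑ i, (ℓ x (D i) - ℓ y (D i)) := by
    unfold empLoss; rw [Finset.sum_sub_distrib]; ring
  rw [h1, abs_mul, abs_of_pos (by positivity : (0:ℝ) < 1 / (n:ℝ))]
  have h2 : |∑ i, (ℓ x (D i) - ℓ y (D i))| ≤ (n : ℝ) * (L * dist x y) := by
    refine (Finset.abs_sum_le_sum_abs _ _).trans ?_
    have h3 : ∀ i : Fin n, |ℓ x (D i) - ℓ y (D i)| ≤ L * dist x y := by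
      intro i
      have := (lipschitzOnWith_iff_dist_le_mul.mp (hlip (D i))) x hx y hy
      simpa [Real.dist_eq, hLc] using this
    calc ∑ i, |ℓ x (D i) - ℓ y (D i)| ≤ ∑ _i : Fin n, L * dist x y :=
          Finset.sum_le_sum fun i _ => h3 i
      _ = (n : ℝ) * (L * dist x y) := by
          rw [Finset.sum_const, Finset.card_univ, Fintype.card_fin, nsmul_eq_mul]
  calc 1 / (n:ℝ) * |∑ i, (ℓ x (D i) - ℓ y (D i))|
      ≤ 1 / (n:ℝ) * ((n : ℝ) * (L * dist x y)) := by
        exact mul_le_mul_of_nonneg_left h2 (by positivity)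
    _ = L * dist x y := by field_simp

/-- Theorem 3.5: utility of the exponential mechanism for
non-convex Lipschitz losses over a convex constraint set. -/
theorem exponential_mechanism_utility_nonconvex :
    ∃ c : ℝ, 0 < c ∧
      ∀ (p n : ℕ), 1 ≤ p → 1 ≤ n → ∀ (τ : Type) (ℓ : Eu p → τ → ℝ),
      ∀ (C : Set (Eu p)), IsCompact C → Convex ℝ C →
        0 < Metric.diam C → 0 < volume C →
      ∀ (L : ℝ), 0 < L →
        (∀ d : τ, LipschitzOnWith L.toNNReal (fun θ => ℓ θ d) C) →
      ∀ (ε : ℝ), 0 < ε → (p : ℝ) ≤ ε * n / 2 →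
      ∀ (D : Fin n → τ),
        (∫ θ, empLoss ℓ D θ
            ∂(gibbs C (ε * n / (2 * L * Metric.diam C)) (empLoss ℓ D))) -
          sInf (empLoss ℓ D '' C) ≤
        c * (L * p * Metric.diam C / (ε * n)) * Real.log (ε * n / p) := by
  refine ⟨16, by norm_num, ?_⟩
  intro p n hp hn τ ℓ C hC hconv hd hv L hL hlip ε hε hpn D
  have hn0 : (0:ℝ) < n := by exact_mod_cast hn
  have hppos : (0:ℝ) < p := by exact_mod_cast hp
  have hp1 : (1:ℝ) ≤ p := by exact_mod_cast hp
  set dC : ℝ := Metric.diam C with hdC_def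
  have hβ : 0 < ε * n / (2 * L * dC) := by positivity
  have hFlip := empLoss_lipschitz ℓ D hL.le hn hlip
  have hB : ε * (n:ℝ) / (2 * L * dC) * L * dC = ε * n / 2 := by
    field_simp
  have hpB : (p : ℝ) ≤ ε * (n:ℝ) / (2 * L * dC) * L * dC := by rw [hB]; exact hpn
  have key := gibbs_utility hp hC hconv hd hv hL hFlip hβ hpB
  rw [← hdC_def] at key
  rw [hB] at key
  -- arithmetic
  set s : ℝ := ε * n with hs_def
  have hs : 0 < s := by positivity
  set Lg : ℝ := Real.log (s / p) with hLg_def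
  have hsp2 : 2 ≤ s / p := by
    rw [le_div_iff₀ hppos]; linarith
  have hLg2 : Real.log 2 ≤ Lg := Real.log_le_log (by norm_num) hsp2
  have hLgpos : 0 < Lg := lt_of_lt_of_le (Real.log_pos one_lt_two) hLg2
  have h2Lg : 1 ≤ 2 * Lg := by nlinarith [Real.log_two_gt_d9]
  have hlog1 : Real.log (s / 2 / p) ≤ Lg := by
    refine Real.log_le_log (by positivity) ?_
    exact (div_le_div_iff_of_pos_right hppos).2 (by linarith)
  have hLg_eq : Lg = Real.log s - Real.log p := by
    rw [hLg_def, Real.log_div hs.ne' hppos.ne']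
  have hlog2 : Real.log (s / 2) ≤ Lg + p := by
    rw [Real.log_div hs.ne' two_ne_zero]
    have Hp : Real.log p ≤ p := (Real.log_le_sub_one_of_pos hppos).trans (by linarith)
    have Hl2 : 0 ≤ Real.log 2 := Real.log_nonneg one_le_two
    linarith [hLg_eq]
  have hmain : (p : ℝ) * Real.log (s / 2 / p) + p + Real.log (s / 2) + 1
      ≤ 8 * (p * Lg) := by
    have A : (p : ℝ) * Real.log (s / 2 / p) ≤ p * Lg :=
      mul_le_mul_of_nonneg_left hlog1 hppos.le
    have Bb : (p : ℝ) ≤ 2 * (p * Lg) := by nlinarith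
    have Cc : Lg ≤ p * Lg := by nlinarith
    have Dd : (1:ℝ) ≤ 2 * (p * Lg) := by nlinarith
    linarith
  calc (∫ θ, empLoss ℓ D θ
            ∂(gibbs C (ε * n / (2 * L * dC)) (empLoss ℓ D))) -
          sInf (empLoss ℓ D '' C)
      ≤ ((p : ℝ) * Real.log (s / 2 / p) + p + Real.log (s / 2) + 1) / (s / (2 * L * dC)) := by
        exact key
    _ ≤ (8 * (p * Lg)) / (s / (2 * L * dC)) := by gcongr
    _ = 16 * (L * p * dC / s) * Lg := by
        field_simp
        ring

end
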